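/- Let A_1, …, A_{m−1} be a skew Clifford system on ℝ^{n+1} and let F(x,y) = ⟨x,y⟩² + Σ_{q=1}^{m−1} ⟨A_q x, y⟩². For x, y ∈ ℝ^{n+1} with ‖x‖ = ‖y‖ = 1, the gradient of F tangential to S^n × S^n, namely ∇̄F = DF − ⟨DF,(x,0)⟩(x,0) − ⟨DF,(0,y)⟩(0,y) where DF is the Euclidean gradient, satisfies ‖∇̄F‖² = 8F − 8F². -/

import Mathlib

open Matrix
open scoped RealInnerProductSpace BigOperators

noncomputable section

/-- A skew Clifford system `A_1, …, A_{m-1}` on `ℝ^N`: skew-symmetric matrices with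
`A_p A_q + A_q A_p = -2 δ_{pq} Id`. -/
def IsSkewCliffordSystem {N m : ℕ} (A : Fin (m - 1) → Matrix (Fin N) (Fin N) ℝ) : Prop :=
  (∀ p q, A p * A q + A q * A p =
      if p = q then (-2 : ℝ) • (1 : Matrix (Fin N) (Fin N) ℝ) else 0) ∧
  (∀ p, (A p)ᵀ = -A p)

/-- The action of a matrix on Euclidean space. -/
def act {N : ℕ} (A : Matrix (Fin N) (Fin N) ℝ) (x : EuclideanSpace ℝ (Fin N)) :
    EuclideanSpace ℝ (Fin N) :=
  Matrix.toEuclideanLin A x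

/-- The splitting form of the FKM isoparametric polynomial:
`F(x,y) = ⟨x,y⟩² + Σ_q ⟨A_q x, y⟩²`. -/
def FKM {N m : ℕ} (A : Fin (m - 1) → Matrix (Fin N) (Fin N) ℝ)
    (x y : EuclideanSpace ℝ (Fin N)) : ℝ :=
  ⟪x, y⟫ ^ 2 + ∑ q, ⟪act (A q) x, y⟫ ^ 2

/-! ### Auxiliary lemmas -/

section Aux

variable {N : ℕ}

lemma inner_act (B : Matrix (Fin N) (Fin N) ℝ) (u v : EuclideanSpace ℝ (Fin N)) :
    ⟪act B u, v⟫ = ⟪u, act Bᵀ v⟫ := by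
  simp only [act, Matrix.toEuclideanLin_apply, PiLp.inner_apply, RCLike.inner_apply,
    conj_trivial,
    Matrix.mulVec, dotProduct, Matrix.transpose_apply, Finset.sum_mul,
    Finset.mul_sum]
  rw [Finset.sum_comm]
  apply Finset.sum_congr rfl; intro i _; apply Finset.sum_congr rfl; intro j _; ring

lemma act_mul (B C : Matrix (Fin N) (Fin N) ℝ) (u : EuclideanSpace ℝ (Fin N)) :
    act (B * C) u = act B (act C u) := by
  simp [act, Matrix.toEuclideanLin_apply, Matrix.mulVec_mulVec]

lemma act_add (B C : Matrix (Fin N) (Fin N) ℝ) (u : EuclideanSpace ℝ (Fin N)) :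
    act (B + C) u = act B u + act C u := by
  simp [act]

lemma act_neg (B : Matrix (Fin N) (Fin N) ℝ) (u : EuclideanSpace ℝ (Fin N)) :
    act (-B) u = -act B u := by
  simp [act]

lemma act_smul (c : ℝ) (B : Matrix (Fin N) (Fin N) ℝ) (u : EuclideanSpace ℝ (Fin N)) :
    act (c • B) u = c • act B u := by
  simp [act]

lemma act_one (u : EuclideanSpace ℝ (Fin N)) : act 1 u = u := by
  simp [act, Matrix.toEuclideanLin_apply]

lemma act_zero (u : EuclideanSpace ℝ (Fin N)) : act (0 : Matrix (Fin N) (Fin N) ℝ) u = 0 := by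
  simp [act]

lemma inner_act_self (B : Matrix (Fin N) (Fin N) ℝ) (hB : Bᵀ = -B)
    (u : EuclideanSpace ℝ (Fin N)) : ⟪u, act B u⟫ = 0 := by
  have h1 : ⟪act B u, u⟫ = ⟪u, act Bᵀ u⟫ := inner_act B u u
  rw [hB, act_neg, inner_neg_right, real_inner_comm] at h1
  linarith

lemma clifford_inner {m : ℕ} (A : Fin (m - 1) → Matrix (Fin N) (Fin N) ℝ)
    (hA : IsSkewCliffordSystem A) (p q : Fin (m - 1)) (u : EuclideanSpace ℝ (Fin N)) :
    ⟪act (A p) u, act (A q) u⟫ = if p = q then ‖u‖ ^ 2 else 0 := by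
  have h1 : ⟪act (A p) u, act (A q) u⟫ = -⟪u, act (A p * A q) u⟫ := by
    rw [inner_act, ← act_mul]
    rw [hA.2 p, neg_mul, act_neg, inner_neg_right]
  have h2 : ⟪act (A q) u, act (A p) u⟫ = -⟪u, act (A q * A p) u⟫ := by
    rw [inner_act, ← act_mul]
    rw [hA.2 q, neg_mul, act_neg, inner_neg_right]
  have hsum : ⟪u, act (A p * A q + A q * A p) u⟫ =
      if p = q then (-2) * ‖u‖ ^ 2 else 0 := by
    rw [hA.1 p q]
    split
    · rw [act_smul, act_one, inner_smul_right, real_inner_self_eq_norm_sq]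
      try ring
    · rw [act_zero, inner_zero_right]
  rw [act_add, inner_add_right] at hsum
  have hc : ⟪act (A q) u, act (A p) u⟫ = ⟪act (A p) u, act (A q) u⟫ :=
    real_inner_comm _ _
  split
  · next h =>
    rw [if_pos h] at hsum
    subst h
    linarith
  · next h =>
    rw [if_neg h] at hsum
    linarith

lemma hasGradientAt_inner_sq (w x : EuclideanSpace ℝ (Fin N)) :
    HasGradientAt (fun u : EuclideanSpace ℝ (Fin N) => ⟪u, w⟫ ^ 2) ((2 * ⟪x, w⟫) • w) x := by
  rw [hasGradientAt_iff_hasFDerivAt]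
  have h1 : HasFDerivAt (fun u : EuclideanSpace ℝ (Fin N) => ⟪u, w⟫)
      (innerSL ℝ w) x := by
    have := (innerSL ℝ w).hasFDerivAt (x := x)
    convert this using 1
    funext u
    simp [real_inner_comm u w]
  have h2 := h1.fun_mul h1
  have heq : (fun u : EuclideanSpace ℝ (Fin N) => ⟪u, w⟫ ^ 2)
      = fun u => ⟪u, w⟫ * ⟪u, w⟫ := by
    funext u; ring
  rw [heq]
  convert h2 using 1
  · rfl
  apply ContinuousLinearMap.ext; intro v
  simp [InnerProductSpace.toDual_apply_apply, inner_smul_left, real_inner_comm x w,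
    real_inner_comm w v]
  ring

lemma hasGradientAt_sum {ι : Type*} (s : Finset ι)
    (f : ι → EuclideanSpace ℝ (Fin N) → ℝ) (g : ι → EuclideanSpace ℝ (Fin N))
    (x : EuclideanSpace ℝ (Fin N))
    (h : ∀ i ∈ s, HasGradientAt (f i) (g i) x) :
    HasGradientAt (fun u => ∑ i ∈ s, f i u) (∑ i ∈ s, g i) x := by
  simp only [hasGradientAt_iff_hasFDerivAt] at h ⊢
  have := HasFDerivAt.fun_sum h
  simpa [map_sum] using this

lemma hasGradientAt_add {f₁ f₂ : EuclideanSpace ℝ (Fin N) → ℝ}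
    {g₁ g₂ x : EuclideanSpace ℝ (Fin N)}
    (h₁ : HasGradientAt f₁ g₁ x) (h₂ : HasGradientAt f₂ g₂ x) :
    HasGradientAt (fun u => f₁ u + f₂ u) (g₁ + g₂) x := by
  simp only [hasGradientAt_iff_hasFDerivAt] at *
  simpa [map_add] using h₁.fun_add h₂

/-- The general computation: if `v 0', …` wait, stated directly below. -/
lemma grad_inner_sq_family {ι : Type*} [Fintype ι] (w : ι → EuclideanSpace ℝ (Fin N))
    (a x : EuclideanSpace ℝ (Fin N)) :
    gradient (fun u => ⟪u, a⟫ ^ 2 + ∑ q, ⟪u, w q⟫ ^ 2) x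
      = (2 * ⟪x, a⟫) • a + ∑ q, (2 * ⟪x, w q⟫) • w q := by
  refine HasGradientAt.gradient ?_
  exact hasGradientAt_add (hasGradientAt_inner_sq a x)
    (hasGradientAt_sum _ _ _ _ fun q _ => hasGradientAt_inner_sq (w q) x)

/-- Key norm computation for a vector `G = (2s)•a + ∑ (2 c q)•w q` built from an
orthonormal family orthogonal to `a`, with `‖a‖ = ‖z‖ = 1`,
`⟪a, z⟫ = s`, `⟪w q, z⟫ = c q`. -/
lemma key_norm {ι : Type*} [Fintype ι] [DecidableEq ι] (a z : EuclideanSpace ℝ (Fin N))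
    (w : ι → EuclideanSpace ℝ (Fin N)) (s : ℝ) (c : ι → ℝ)
    (ha : ‖a‖ = 1) (hz : ‖z‖ = 1)
    (haz : ⟪a, z⟫ = s) (hwz : ∀ q, ⟪w q, z⟫ = c q)
    (haw : ∀ q, ⟪a, w q⟫ = 0)
    (hww : ∀ p q, ⟪w p, w q⟫ = if p = q then 1 else 0) :
    ‖((2 * s) • a + ∑ q, (2 * c q) • w q) -
        ⟪((2 * s) • a + ∑ q, (2 * c q) • w q), z⟫ • z‖ ^ 2
      = 4 * (s ^ 2 + ∑ q, c q ^ 2) - 4 * (s ^ 2 + ∑ q, c q ^ 2) ^ 2 := by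
  set F := s ^ 2 + ∑ q, c q ^ 2 with hF
  set G : EuclideanSpace ℝ (Fin N) := (2 * s) • a + ∑ q, (2 * c q) • w q with hG
  have hGz : ⟪G, z⟫ = 2 * F := by
    rw [hG, inner_add_left, sum_inner, real_inner_smul_left, haz]
    have : ∀ q : ι, ⟪(2 * c q) • w q, z⟫ = 2 * c q ^ 2 := by
      intro q
      rw [real_inner_smul_left, hwz]; ring
    rw [Finset.sum_congr rfl fun q _ => this q, ← Finset.mul_sum, hF]
    ring
  have hGG : ⟪G, G⟫ = 4 * F := by
    rw [hG, real_inner_add_add_self]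
    have h1 : ⟪(2 * s) • a, (2 * s) • a⟫ = 4 * s ^ 2 := by
      rw [real_inner_smul_left, real_inner_smul_right, real_inner_self_eq_norm_sq, ha]
      ring
    have h2 : ⟪(2 * s) • a, ∑ q, (2 * c q) • w q⟫ = 0 := by
      rw [inner_sum]
      apply Finset.sum_eq_zero
      intro q _
      rw [real_inner_smul_left, real_inner_smul_right, haw]; ring
    have h3 : ⟪∑ p, (2 * c p) • w p, ∑ q, (2 * c q) • w q⟫ = 4 * ∑ q, c q ^ 2 := by
      rw [sum_inner]
      have : ∀ p : ι, ⟪(2 * c p) • w p, ∑ q, (2 * c q) • w q⟫ = 4 * c p ^ 2 := by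
        intro p
        rw [inner_sum]
        have : ∀ q : ι, ⟪(2 * c p) • w p, (2 * c q) • w q⟫
            = if p = q then 4 * c p * c q else 0 := by
          intro q
          rw [real_inner_smul_left, real_inner_smul_right, hww]
          split <;> ring
        rw [Finset.sum_congr rfl fun q _ => this q, Finset.sum_ite_eq]
        simp
        try ring
      rw [Finset.sum_congr rfl fun p _ => this p, Finset.mul_sum]
    rw [h1, h2, h3, hF]
    ring
  rw [hGz]
  rw [norm_sub_sq_real]
  have h4 : ‖G‖ ^ 2 = 4 * F := by rw [← real_inner_self_eq_norm_sq, hGG]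
  have h5 : ⟪G, (2 * F) • z⟫ = 4 * F ^ 2 := by
    rw [real_inner_smul_right, hGz]; ring
  have h6 : ‖(2 * F) • z‖ ^ 2 = 4 * F ^ 2 := by
    rw [← real_inner_self_eq_norm_sq, real_inner_smul_left, real_inner_smul_right,
      real_inner_self_eq_norm_sq, hz]
    ring
  rw [h4, h5, h6]
  ring

end Aux

/-- for `‖x‖ = ‖y‖ = 1`, the gradient of `F` tangential to `S^n × S^n`,
`∇̄F = DF − ⟨DF,(x,0)⟩(x,0) − ⟨DF,(0,y)⟩(0,y)`, satisfies `‖∇̄F‖² = 8F − 8F²`.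
Here `DF = (Gx, Gy)` is the full Euclidean gradient, `Gx`, `Gy` being the gradients of
`F` in the `x`- and `y`-variables, so that
`‖∇̄F‖² = ‖Gx − ⟨Gx,x⟩ x‖² + ‖Gy − ⟨Gy,y⟩ y‖²`. -/
theorem stmt5 (n m : ℕ) (hn : 1 ≤ n) (hm : 1 ≤ m)
    (A : Fin (m - 1) → Matrix (Fin (n + 1)) (Fin (n + 1)) ℝ)
    (hA : IsSkewCliffordSystem A)
    (x y : EuclideanSpace ℝ (Fin (n + 1))) (hx : ‖x‖ = 1) (hy : ‖y‖ = 1) :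
    ‖gradient (fun x' => FKM A x' y) x -
        ⟪gradient (fun x' => FKM A x' y) x, x⟫ • x‖ ^ 2 +
      ‖gradient (fun y' => FKM A x y') y -
        ⟪gradient (fun y' => FKM A x y') y, y⟫ • y‖ ^ 2 =
      8 * FKM A x y - 8 * (FKM A x y) ^ 2 := by
  set s : ℝ := ⟪x, y⟫ with hs
  set c : Fin (m - 1) → ℝ := fun q => ⟪act (A q) x, y⟫ with hc
  have hFval : FKM A x y = s ^ 2 + ∑ q, c q ^ 2 := rfl
  -- the x-gradient
  have ex : (fun x' => FKM A x' y)
      = fun x' => ⟪x', y⟫ ^ 2 + ∑ q, ⟪x', act (A q)ᵀ y⟫ ^ 2 := by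
    funext x'
    unfold FKM
    congr 1
    exact Finset.sum_congr rfl fun q _ => by rw [inner_act]
  have hGx : gradient (fun x' => FKM A x' y) x
      = (2 * s) • y + ∑ q, (2 * c q) • (act (A q)ᵀ y) := by
    rw [ex, grad_inner_sq_family]
    congr 1
    refine Finset.sum_congr rfl fun q _ => ?_
    rw [← inner_act]
  -- the y-gradient
  have ey : (fun y' => FKM A x y')
      = fun y' => ⟪y', x⟫ ^ 2 + ∑ q, ⟪y', act (A q) x⟫ ^ 2 := by
    funext y'
    unfold FKM
    rw [real_inner_comm x y']
    congr 1
    exact Finset.sum_congr rfl fun q _ => by rw [real_inner_comm]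
  have hGy : gradient (fun y' => FKM A x y') y
      = (2 * s) • x + ∑ q, (2 * c q) • (act (A q) x) := by
    have hs' : ∀ u v : EuclideanSpace ℝ (Fin (n + 1)), ⟪u, v⟫ = ⟪v, u⟫ := fun u v =>
      real_inner_comm v u
    rw [ey, grad_inner_sq_family, hs' y x]
    congr 1
    refine Finset.sum_congr rfl fun q _ => ?_
    rw [hs' y (act (A q) x)]
  -- x-side inner product facts  (w q = act (A q)ᵀ y)
  have hwq : ∀ q, act (A q)ᵀ y = -(act (A q) y) := fun q => by
    rw [hA.2 q, act_neg]
  have term1 : ‖gradient (fun x' => FKM A x' y) x -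
      ⟪gradient (fun x' => FKM A x' y) x, x⟫ • x‖ ^ 2
      = 4 * (s ^ 2 + ∑ q, c q ^ 2) - 4 * (s ^ 2 + ∑ q, c q ^ 2) ^ 2 := by
    rw [hGx]
    refine key_norm y x (fun q => act (A q)ᵀ y) s c hy hx ?_ ?_ ?_ ?_
    · exact real_inner_comm x y
    · intro q
      show ⟪act (A q)ᵀ y, x⟫ = c q
      rw [real_inner_comm, ← inner_act]
    · intro q
      show ⟪y, act (A q)ᵀ y⟫ = 0
      rw [hwq, inner_neg_right, inner_act_self (A q) (hA.2 q), neg_zero]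
    · intro p q
      show ⟪act (A p)ᵀ y, act (A q)ᵀ y⟫ = _
      rw [hwq, hwq, inner_neg_neg, clifford_inner A hA, hy]
      simp
  have term2 : ‖gradient (fun y' => FKM A x y') y -
      ⟪gradient (fun y' => FKM A x y') y, y⟫ • y‖ ^ 2
      = 4 * (s ^ 2 + ∑ q, c q ^ 2) - 4 * (s ^ 2 + ∑ q, c q ^ 2) ^ 2 := by
    rw [hGy]
    refine key_norm x y (fun q => act (A q) x) s c hx hy rfl ?_ ?_ ?_
    · intro q
      show ⟪act (A q) x, y⟫ = c q
      rfl
    · intro q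
      show ⟪x, act (A q) x⟫ = 0
      exact inner_act_self (A q) (hA.2 q) x
    · intro p q
      show ⟪act (A p) x, act (A q) x⟫ = _
      rw [clifford_inner A hA, hx]
      simp
  rw [term1, term2, hFval]
  ring
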